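/- A permutation π has reversal distance at most 1 from the identity if and only if π avoids all three of the patterns 2143, 231 and 312; that is, B_1^{rd} = Av(2143, 231, 312). -/

import Mathlib

/-! ## Basic definitions: permutations as lists, reversals, distances -/

/-- Decorations for peg permutations: `+`, `-`, `•`. -/
inductive Deco where
  | plus : Deco
  | minus : Deco
  | dot : Deco
deriving DecidableEq, Repr

/-- A peg permutation: a list of entries together with decorations. -/
abbrev PegPerm := List (ℕ × Deco)

def pegDefault : ℕ × Deco := (0, Deco.dot)

/-- The identity permutation `1 2 ⋯ n` as a list. -/
def idPerm (n : ℕ) : List ℕ := List.range' 1 n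

/-- A list of naturals is a permutation (of `1,…,n` where `n` is its length). -/
def IsPermList (π : List ℕ) : Prop := π.Perm (idPerm π.length)

/-- Reverse the segment of a list from (0-indexed) position `i` to `j` inclusive. -/
def segReverse {α : Type*} (l : List α) (i j : ℕ) : List α :=
  l.take i ++ ((l.drop i).take (j + 1 - i)).reverse ++ l.drop (j + 1)

/-- One reversal step on permutations (reverse a segment of length at least 2). -/
def RevStep (l l' : List ℕ) : Prop :=
  ∃ i j, i < j ∧ j < l.length ∧ l' = segReverse l i j

/-- One prefix reversal step on permutations (reverse a prefix of length at least 2). -/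
def PrefRevStep (l l' : List ℕ) : Prop :=
  ∃ j, 0 < j ∧ j < l.length ∧ l' = segReverse l 0 j

/-- Reachability in exactly `k` steps of the step relation `step`. -/
def ReachIn {α : Type*} (step : α → α → Prop) : ℕ → α → α → Prop
  | 0, x, y => x = y
  | k + 1, x, y => ∃ z, step x z ∧ ReachIn step k z y

/-- The reversal distance of a permutation from the identity. -/
noncomputable def rd (π : List ℕ) : ℕ :=
  sInf {k | ReachIn RevStep k π (idPerm π.length)}

/-- The prefix reversal distance of a permutation from the identity. -/
noncomputable def prd (π : List ℕ) : ℕ :=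
  sInf {k | ReachIn PrefRevStep k π (idPerm π.length)}

/-- The ball of radius `k` in the reversal model. -/
def Brd (k : ℕ) : Set (List ℕ) := {π | IsPermList π ∧ rd π ≤ k}

/-- The ball of radius `k` in the prefix reversal model. -/
def Bprd (k : ℕ) : Set (List ℕ) := {π | IsPermList π ∧ prd π ≤ k}

/-! ## Peg permutations: oriented reversals and distances -/

def flipDeco : Deco → Deco
  | Deco.plus => Deco.minus
  | Deco.minus => Deco.plus
  | Deco.dot => Deco.dot

/-- Oriented reversal of the segment from position `i` to `j` (0-indexed) of a peg
permutation: the segment is reversed and the decorations `+`, `-` are swapped. -/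
def pegSegReverse (l : PegPerm) (i j : ℕ) : PegPerm :=
  l.take i ++ (((l.drop i).take (j + 1 - i)).map (fun p => (p.1, flipDeco p.2))).reverse
    ++ l.drop (j + 1)

/-- One oriented reversal step on peg permutations. -/
def PegRevStep (l l' : PegPerm) : Prop :=
  ∃ i j, i ≤ j ∧ j < l.length ∧ l' = pegSegReverse l i j

/-- One oriented prefix reversal step on peg permutations. -/
def PegPrefRevStep (l l' : PegPerm) : Prop :=
  ∃ j, j < l.length ∧ l' = pegSegReverse l 0 j

/-- The underlying list of a peg permutation is a permutation. -/
def IsPegPermList (l : PegPerm) : Prop := IsPermList (l.map Prod.fst)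

/-- An identity peg permutation: underlying identity, every decoration `+` or `•`. -/
def IsIdPeg (l : PegPerm) : Prop :=
  l.map Prod.fst = idPerm l.length ∧ ∀ p ∈ l, p.2 ≠ Deco.minus

/-- The reversal distance of a peg permutation from an identity peg permutation. -/
noncomputable def pegRd (l : PegPerm) : ℕ :=
  sInf {k | ∃ m, IsIdPeg m ∧ ReachIn PegRevStep k l m}

/-- The prefix reversal distance of a peg permutation from an identity peg permutation. -/
noncomputable def pegPrd (l : PegPerm) : ℕ :=
  sInf {k | ∃ m, IsIdPeg m ∧ ReachIn PegPrefRevStep k l m}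

/-- The ball of radius `k` of peg permutations in the reversal model. -/
def PegBrd (k : ℕ) : Set PegPerm := {l | IsPegPermList l ∧ pegRd l ≤ k}

/-- The ball of radius `k` of peg permutations in the prefix reversal model. -/
def PegBprd (k : ℕ) : Set PegPerm := {l | IsPegPermList l ∧ pegPrd l ≤ k}

/-! ## Patterns -/

/-- Two lists of the same length are order-isomorphic. -/
def OrderIsoList (s t : List ℕ) : Prop :=
  s.length = t.length ∧
  ∀ i j, i < s.length → j < s.length → (s.getD i 0 < s.getD j 0 ↔ t.getD i 0 < t.getD j 0)

/-- `σ` is a (classical) pattern of `τ`. -/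
def IsPattern (σ τ : List ℕ) : Prop :=
  ∃ s, s.Sublist τ ∧ OrderIsoList s σ

/-- `σ` is a peg pattern of `τ`: some subsequence of `τ` is order-isomorphic to `σ`
and whenever an entry of the subsequence is decorated `+` (resp. `-`), the
corresponding entry of `σ` is decorated `+` (resp. `-`). -/
def IsPegPattern (σ τ : PegPerm) : Prop :=
  ∃ s : PegPerm, s.Sublist τ ∧ OrderIsoList (s.map Prod.fst) (σ.map Prod.fst) ∧
    ∀ i, i < s.length →
      ((s.getD i pegDefault).2 = Deco.plus → (σ.getD i pegDefault).2 = Deco.plus) ∧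
      ((s.getD i pegDefault).2 = Deco.minus → (σ.getD i pegDefault).2 = Deco.minus)

/-! ## Strips, clean compact and compact peg permutations -/

/-- Two adjacent entries of a peg permutation lie in a common strip. -/
def StripPair (p q : ℕ × Deco) : Prop :=
  (q.1 = p.1 + 1 ∧ p.2 ≠ Deco.minus ∧ q.2 ≠ Deco.minus) ∨
  (p.1 = q.1 + 1 ∧ p.2 ≠ Deco.plus ∧ q.2 ≠ Deco.plus)

/-- A peg permutation is clean compact when all its strips have length 1, i.e. no two
adjacent entries lie in a common strip. -/
def CleanCompact (l : PegPerm) : Prop :=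
  ∀ i, i + 1 < l.length → ¬ StripPair (l.getD i pegDefault) (l.getD (i + 1) pegDefault)

/-- A peg permutation is compact when every strip has length 1 or consists
exclusively of entries decorated `•`. -/
def CompactPeg (l : PegPerm) : Prop :=
  ∀ i, i + 1 < l.length → StripPair (l.getD i pegDefault) (l.getD (i + 1) pegDefault) →
    (l.getD i pegDefault).2 = Deco.dot ∧ (l.getD (i + 1) pegDefault).2 = Deco.dot

/-! ## The clean compact peg permutation `peg(γ)` associated with a permutation -/

/-- The decomposition of a permutation into maximal monotone strips of adjacent values. -/
def stripGroups (γ : List ℕ) : List (List ℕ) :=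
  γ.splitBy (fun a b => b == a + 1 || a == b + 1)

def stripMin (s : List ℕ) : ℕ := s.foldr min (s.headD 0)

def stripDeco (s : List ℕ) : Deco :=
  if s.length ≤ 1 then Deco.dot
  else if s.headD 0 < s.getLastD 0 then Deco.plus
  else Deco.minus

/-- Rank of `v` among `vals` (used for rescaling). -/
def rankIn (vals : List ℕ) (v : ℕ) : ℕ := (vals.filter (fun w => w ≤ v)).length

/-- The clean compact peg permutation associated with a permutation: replace each
strip by its minimum, decorated `+`/`-`/`•` according to the kind of strip, and rescale. -/
def pegOf (γ : List ℕ) : PegPerm :=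
  (stripGroups γ).map (fun s => (rankIn ((stripGroups γ).map stripMin) (stripMin s), stripDeco s))

/-! ## Monotone inflations and grid classes -/

/-- A legal inflation vector for a peg permutation. -/
def LegalVec (πε : PegPerm) (v : List ℕ) : Prop :=
  v.length = πε.length ∧
  ∀ i, i < πε.length → (πε.getD i pegDefault).2 = Deco.dot → v.getD i 0 ≤ 1

/-- The values of the `i`-th block of the monotone inflation of `πε` through `v`:
an increasing (resp. decreasing) run of `vᵢ` values, occupying the interval of values
determined by the relative order of the entries of `πε`. -/
def blockVals (πε : PegPerm) (v : List ℕ) (i : ℕ) : List ℕ :=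
  let off := (((List.range πε.length).filter
      (fun j => (πε.getD j pegDefault).1 < (πε.getD i pegDefault).1)).map
      (fun j => v.getD j 0)).sum
  if (πε.getD i pegDefault).2 = Deco.minus then (List.range' (off + 1) (v.getD i 0)).reverse
  else List.range' (off + 1) (v.getD i 0)

/-- The monotone inflation `πε[v]`. -/
def inflate (πε : PegPerm) (v : List ℕ) : List ℕ :=
  ((List.range πε.length).map (blockVals πε v)).flatten

/-- The grid class of a peg permutation: all its monotone inflations through legal
inflation vectors. -/
def GridOf (πε : PegPerm) : Set (List ℕ) :=
  {γ | ∃ v, LegalVec πε v ∧ γ = inflate πε v}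

/-- Compatibility of decorations in peg monotone inflations: a `+` entry is inflated by
an identity peg permutation (decorations `+`/`•`), a `-` entry by a reverse identity peg
permutation (decorations `-`/`•`), a `•` entry stays `•`. -/
def DecoOK : Deco → Deco → Prop
  | Deco.plus, d => d ≠ Deco.minus
  | Deco.minus, d => d ≠ Deco.plus
  | Deco.dot, d => d = Deco.dot

/-- The peg grid class of a peg permutation: all its peg monotone inflations. -/
def GridPegOf (πε : PegPerm) : Set PegPerm :=
  {γ | ∃ v, LegalVec πε v ∧ ∃ bs : List PegPerm,
    bs.length = πε.length ∧ γ = bs.flatten ∧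
    ∀ i, i < πε.length →
      (bs.getD i []).map Prod.fst = blockVals πε v i ∧
      ∀ p ∈ bs.getD i [], DecoOK (πε.getD i pegDefault).2 p.2}

/-! ## The inflation `π^ε_I` and the permutation `π̃^ε_I` -/

/-- Canonical peg inflation: every inflated entry keeps the decoration of the
original one. -/
def pegInflate (πε : PegPerm) (v : List ℕ) : PegPerm :=
  ((List.range πε.length).map
    (fun i => (blockVals πε v i).map (fun x => (x, (πε.getD i pegDefault).2)))).flatten

/-- The inflation vector associated with the multiset `I = {i, j}` (0-indexed):
entries `i` and `j` are inflated by one more element each. -/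
def inflVec (n i j : ℕ) : List ℕ :=
  (List.range n).map (fun l => 1 + (if l = i then 1 else 0) + (if l = j then 1 else 0))

/-- `π^ε_I` where `I = {i, j}` with `i ≤ j` 0-indexed. -/
def pegI (πε : PegPerm) (i j : ℕ) : PegPerm := pegInflate πε (inflVec πε.length i j)

/-- `π̃^ε_I`: the result of applying to `π^ε_I` the oriented reversal of the segment
of (0-indexed) positions `i+1, …, j+1`. -/
def pegITilde (πε : PegPerm) (i j : ℕ) : PegPerm := pegSegReverse (pegI πε i j) (i + 1) (j + 1)

/-! ## Clean compact peg bases -/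

/-- The clean compact peg basis of a set `B` of peg permutations: the clean compact
peg permutations not in `B` all of whose proper clean compact peg patterns are in `B`. -/
def CCPegBasis (B : Set PegPerm) : Set PegPerm :=
  {πε | IsPegPermList πε ∧ CleanCompact πε ∧ πε ∉ B ∧
    ∀ γ, IsPegPermList γ → CleanCompact γ → IsPegPattern γ πε → γ ≠ πε → γ ∈ B}

/-! ## The exceptional peg permutations for the prefix reversal model -/

/-- `Θ_e(n)` for even `n`:  `n• (n−2)• ⋯ 4• 2• 1⁺ 3• ⋯ (n−3)• (n−1)•`. -/
def ThetaE (n : ℕ) : PegPerm :=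
  ((List.range (n / 2)).map (fun i => (n - 2 * i, Deco.dot))) ++ [(1, Deco.plus)] ++
  ((List.range (n / 2 - 1)).map (fun i => (3 + 2 * i, Deco.dot)))

/-- `Θ_o(n)` for odd `n`:  `n• (n−2)• ⋯ 3• 1⁻ 2• 4• ⋯ (n−3)• (n−1)•`. -/
def ThetaO (n : ℕ) : PegPerm :=
  ((List.range ((n - 1) / 2)).map (fun i => (n - 2 * i, Deco.dot))) ++ [(1, Deco.minus)] ++
  ((List.range ((n - 1) / 2)).map (fun i => (2 + 2 * i, Deco.dot)))

/-- `Λ_e(n)` for even `n` and `t = n/2`:  `(t+1)⁺ t• (t+2)• (t−1)• ⋯ (n−1)• 2• n• 1•`. -/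
def LambdaE (n : ℕ) : PegPerm :=
  (List.range (n / 2)).flatMap
    (fun i => [(n / 2 + 1 + i, if i = 0 then Deco.plus else Deco.dot), (n / 2 - i, Deco.dot)])

/-- `Λ_o(n)` for odd `n` and `t = (n+1)/2`:  `t⁻ (t+1)• (t−1)• (t+2)• ⋯ (n−1)• 2• n• 1•`. -/
def LambdaO (n : ℕ) : PegPerm :=
  ((n + 1) / 2, Deco.minus) ::
    (List.range ((n + 1) / 2 - 1)).flatMap
      (fun i => [((n + 1) / 2 + 1 + i, Deco.dot), ((n + 1) / 2 - 1 - i, Deco.dot)])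

/-! ## Auxiliary lemmas -/

section Aux

lemma seg_decomp {A B C : List ℕ} {i j : ℕ} (hA : A.length = i) (hB : B.length = j + 1 - i)
    (hij : i ≤ j) :
    segReverse (A ++ (B ++ C)) i j = A ++ (B.reverse ++ C) := by
  unfold segReverse
  have h1 : (A ++ (B ++ C)).take i = A := List.take_left' hA
  have h2 : (A ++ (B ++ C)).drop i = B ++ C := List.drop_left' hA
  have h4 : (A ++ (B ++ C)).drop (j + 1) = C := by
    rw [← List.append_assoc]
    apply List.drop_left'
    simp [hA, hB]; omega
  rw [h1, h2, List.take_left' hB, h4, List.append_assoc]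

lemma list_decomp {l : List ℕ} {i j : ℕ} (hij : i ≤ j) (hj : j < l.length) :
    ∃ A B C : List ℕ, l = A ++ (B ++ C) ∧ A.length = i ∧ B.length = j + 1 - i ∧
      segReverse l i j = A ++ (B.reverse ++ C) := by
  refine ⟨l.take i, (l.drop i).take (j + 1 - i), l.drop (j + 1), ?_, by simp; omega,
    by simp; omega, by simp [segReverse]⟩
  conv_lhs => rw [← List.take_append_drop i l]
  congr 1
  conv_lhs => rw [← List.take_append_drop (j + 1 - i) (l.drop i)]
  congr 1
  rw [List.drop_drop]
  congr 1
  omega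

lemma seg_perm {l : List ℕ} {i j : ℕ} (hij : i ≤ j) (hj : j < l.length) :
    (segReverse l i j).Perm l := by
  obtain ⟨A, B, C, hd, h1, h2, hseg⟩ := list_decomp hij hj
  rw [hseg]
  conv_rhs => rw [hd]
  exact List.Perm.append_left _ (List.Perm.append_right _ (List.reverse_perm _))

lemma seg_invol {l : List ℕ} {i j : ℕ} (hij : i ≤ j) (hj : j < l.length) :
    segReverse (segReverse l i j) i j = l := by
  obtain ⟨A, B, C, hd, h1, h2, hseg⟩ := list_decomp hij hj
  rw [hseg, seg_decomp h1 (by simpa using h2) hij, List.reverse_reverse, ← hd]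

lemma revstep_lift {l l' : List ℕ} (x : ℕ) (h : RevStep l l') :
    RevStep (l ++ [x]) (l' ++ [x]) := by
  obtain ⟨i, j, hij, hj, rfl⟩ := h
  obtain ⟨A, B, C, hd, h1, h2, hseg⟩ := list_decomp hij.le hj
  refine ⟨i, j, hij, by simp; omega, ?_⟩
  have e2 : l ++ [x] = A ++ (B ++ (C ++ [x])) := by rw [hd]; simp
  rw [e2, seg_decomp h1 h2 hij.le, hseg]
  simp

lemma reach_lift {l l' : List ℕ} (x : ℕ) {k : ℕ}
    (h : ReachIn RevStep k l l') : ReachIn RevStep k (l ++ [x]) (l' ++ [x]) := by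
  induction k generalizing l with
  | zero => simpa [ReachIn] using congrArg (· ++ [x]) h
  | succ k ih =>
    obtain ⟨z, hz, hr⟩ := h
    exact ⟨z ++ [x], revstep_lift x hz, ih hr⟩

lemma sortable_aux : ∀ n (l : List ℕ), l.Perm (List.range' 1 n) →
    ∃ k, ReachIn RevStep k l (List.range' 1 n) := by
  intro n
  induction n with
  | zero => intro l hl; exact ⟨0, by simpa [ReachIn] using hl.eq_nil⟩
  | succ m ih =>
    intro l hl
    have hlen : l.length = m + 1 := by simpa using hl.length_eq
    have hmem : m + 1 ∈ l := hl.mem_iff.mpr (by simp [List.mem_range'_1])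
    set p := List.idxOf (m + 1) l with hp
    have hplt : p < m + 1 := by rw [← hlen]; exact List.idxOf_lt_length_iff.mpr hmem
    have hget : l[p]'(by omega) = m + 1 := List.getElem_idxOf (by omega)
    have hr1m : List.range' 1 (m + 1) = List.range' 1 m ++ [m + 1] := by
      rw [List.range'_concat]; norm_num [Nat.add_comm]
    have key : ∀ c : List ℕ, l.Perm (c ++ [m + 1]) →
        ∃ k, ReachIn RevStep k (c ++ [m+1]) (List.range' 1 (m+1)) := by
      intro c hc
      have hcp : c.Perm (List.range' 1 m) := by
        have h0 : (c ++ [m+1]).Perm (List.range' 1 m ++ [m+1]) :=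
          hc.symm.trans (hl.trans (by rw [hr1m]))
        exact (((List.perm_append_singleton _ _).symm.trans h0).trans
          (List.perm_append_singleton _ _)).cons_inv
      obtain ⟨k, hk⟩ := ih c hcp
      exact ⟨k, by rw [hr1m]; exact reach_lift _ hk⟩
    by_cases hpm : p = m
    · have hdec : l = l.take m ++ [m + 1] := by
        conv_lhs => rw [← List.take_append_drop m l]
        congr 1
        rw [List.drop_eq_getElem_cons (show m < l.length by omega)]
        have h5 : l.drop (m+1) = [] := by simp [hlen]
        have h6 : l[m]'(by omega) = m + 1 := by
          have he : l[m]'(by omega) = l[p]'(by omega) := by congr 1; omega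
          rw [he, hget]
        rw [h5]
        exact congrArg (fun z => [z]) h6
      obtain ⟨k, hk⟩ := key (l.take m) (by rw [← hdec])
      exact ⟨k, by rw [hdec]; exact hk⟩
    · have hplt' : p < m := by omega
      have hstep : RevStep l (segReverse l p m) := ⟨p, m, hplt', by omega, rfl⟩
      have hform : segReverse l p m = (l.take p ++ (l.drop (p+1)).reverse) ++ [m + 1] := by
        unfold segReverse
        have hd1 : l.drop (m + 1) = [] := by simp [hlen]
        have hd2 : (l.drop p).take (m + 1 - p) = l.drop p := by
          apply List.take_of_length_le; simp [hlen]
        rw [hd1, hd2, List.drop_eq_getElem_cons (show p < l.length by omega), hget]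
        simp
      have hperm2 : l.Perm ((l.take p ++ (l.drop (p+1)).reverse) ++ [m + 1]) := by
        rw [← hform]; exact (seg_perm (by omega) (by omega)).symm
      obtain ⟨k, hk⟩ := key _ hperm2
      exact ⟨k + 1, ⟨_, hstep, by rw [hform]; exact hk⟩⟩

lemma sortable {l : List ℕ} (h : IsPermList l) :
    ∃ k, ReachIn RevStep k l (idPerm l.length) := sortable_aux l.length l h

/-! ### Explicit pattern containment -/

def P231 (τ : List ℕ) : Prop := ∃ a b c, [a,b,c].Sublist τ ∧ c < a ∧ a < b
def P312 (τ : List ℕ) : Prop := ∃ a b c, [a,b,c].Sublist τ ∧ b < c ∧ c < a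
def P2143 (τ : List ℕ) : Prop := ∃ a b c d, [a,b,c,d].Sublist τ ∧ b < a ∧ a < d ∧ d < c

lemma isPattern_231 {τ : List ℕ} : IsPattern [2,3,1] τ ↔ P231 τ := by
  constructor
  · rintro ⟨s, hs, hlen, hiso⟩
    obtain ⟨a, b, c, rfl⟩ := List.length_eq_three.mp (by simpa using hlen)
    refine ⟨a, b, c, hs, ?_, ?_⟩
    · have := (hiso 2 0 (by simp) (by simp)).mpr (by simp [List.getD])
      simpa [List.getD] using this
    · have := (hiso 0 1 (by simp) (by simp)).mpr (by simp [List.getD])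
      simpa [List.getD] using this
  · rintro ⟨a, b, c, hs, h1, h2⟩
    refine ⟨[a,b,c], hs, by simp, ?_⟩
    intro i j hi hj
    simp at hi hj
    interval_cases i <;> interval_cases j <;> simp [List.getD] <;> omega

lemma isPattern_312 {τ : List ℕ} : IsPattern [3,1,2] τ ↔ P312 τ := by
  constructor
  · rintro ⟨s, hs, hlen, hiso⟩
    obtain ⟨a, b, c, rfl⟩ := List.length_eq_three.mp (by simpa using hlen)
    refine ⟨a, b, c, hs, ?_, ?_⟩
    · have := (hiso 1 2 (by simp) (by simp)).mpr (by simp [List.getD])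
      simpa [List.getD] using this
    · have := (hiso 2 0 (by simp) (by simp)).mpr (by simp [List.getD])
      simpa [List.getD] using this
  · rintro ⟨a, b, c, hs, h1, h2⟩
    refine ⟨[a,b,c], hs, by simp, ?_⟩
    intro i j hi hj
    simp at hi hj
    interval_cases i <;> interval_cases j <;> simp [List.getD] <;> omega

lemma length_eq_four' {α : Type*} {l : List α} (h : l.length = 4) :
    ∃ a b c d, l = [a, b, c, d] := by
  rcases l with _|⟨a, _|⟨b, _|⟨c, _|⟨d, _|⟨e, t⟩⟩⟩⟩⟩ <;> simp_all

lemma isPattern_2143 {τ : List ℕ} : IsPattern [2,1,4,3] τ ↔ P2143 τ := by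
  constructor
  · rintro ⟨s, hs, hlen, hiso⟩
    obtain ⟨a, b, c, d, rfl⟩ := length_eq_four' (by simpa using hlen)
    refine ⟨a, b, c, d, hs, ?_, ?_, ?_⟩
    · have := (hiso 1 0 (by simp) (by simp)).mpr (by simp [List.getD])
      simpa [List.getD] using this
    · have := (hiso 0 3 (by simp) (by simp)).mpr (by simp [List.getD])
      simpa [List.getD] using this
    · have := (hiso 3 2 (by simp) (by simp)).mpr (by simp [List.getD])
      simpa [List.getD] using this
  · rintro ⟨a, b, c, d, hs, h1, h2, h3⟩
    refine ⟨[a,b,c,d], hs, by simp, ?_⟩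
    intro i j hi hj
    simp at hi hj
    interval_cases i <;> interval_cases j <;> simp [List.getD] <;> omega

/-! ### Avoidance for one-reversal permutations -/

lemma pair_split {α : Type*} {x y : α} {P Q : List α} (h : [x,y].Sublist (P ++ Q)) :
    [x,y].Sublist P ∨ (x ∈ P ∧ y ∈ Q) ∨ [x,y].Sublist Q := by
  rcases List.sublist_append_iff.mp h with ⟨u, v, huv, hu, hv⟩
  rcases u with _|⟨p, _|⟨q, r⟩⟩
  · simp only [List.nil_append] at huv
    right; right; rwa [← huv] at hv
  · simp only [List.cons_append, List.nil_append, List.cons.injEq] at huv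
    obtain ⟨rfl, hv2⟩ := huv
    right; left
    refine ⟨List.singleton_sublist.mp hu, ?_⟩
    rw [← hv2] at hv
    exact hv.subset (by simp : y ∈ [y])
  · simp only [List.cons_append, List.nil_append, List.cons.injEq] at huv
    obtain ⟨rfl, rfl, hr⟩ := huv
    have hr' : r = [] := (List.append_eq_nil_iff.mp hr.symm).1
    subst hr'
    exact Or.inl hu

section AvoidLemma
variable {A D B : List ℕ}
variable (hA : A.Pairwise (· < ·)) (hD : D.Pairwise (· > ·)) (hB : B.Pairwise (· < ·))
variable (hAD : ∀ a ∈ A, ∀ d ∈ D, a < d) (hAB : ∀ a ∈ A, ∀ b ∈ B, a < b)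
variable (hDB : ∀ d ∈ D, ∀ b ∈ B, d < b)

include hA hB hAD hAB hDB in
lemma inv_loc {x y : ℕ} (hs : [x,y].Sublist (A ++ (D ++ B))) (hxy : y < x) :
    [x,y].Sublist D := by
  rcases pair_split hs with h | ⟨hx, hy⟩ | h
  · exact absurd (List.pairwise_iff_forall_sublist.mp hA h) (by omega)
  · rcases List.mem_append.mp hy with hy | hy
    · exact absurd (hAD _ hx _ hy) (by omega)
    · exact absurd (hAB _ hx _ hy) (by omega)
  · rcases pair_split h with h | ⟨hx, hy⟩ | h
    · exact h
    · exact absurd (hDB _ hx _ hy) (by omega)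
    · exact absurd (List.pairwise_iff_forall_sublist.mp hB h) (by omega)

include hA hB hAD hAB hDB in
lemma mem_loc {x y : ℕ} (hs : [x,y].Sublist (A ++ (D ++ B))) (hx : x ∈ D) (hy : y ∈ D) :
    [x,y].Sublist D := by
  rcases pair_split hs with h | ⟨hx', hy'⟩ | h
  · exact absurd (hAD _ (h.subset (by simp : x ∈ [x,y])) _ hx) (by simp)
  · exact absurd (hAD _ hx' _ hx) (by simp)
  · rcases pair_split h with h | ⟨hx', hy'⟩ | h
    · exact h
    · exact absurd (hDB _ hy _ hy') (by simp)
    · exact absurd (hDB _ hy _ (h.subset (by simp : y ∈ [x,y]))) (by simp)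

include hA hD hB hAD hAB hDB in
lemma avoid_ADB :
    ¬ P231 (A ++ (D ++ B)) ∧ ¬ P312 (A ++ (D ++ B)) ∧ ¬ P2143 (A ++ (D ++ B)) := by
  have S1 : ∀ {x y : ℕ}, [x,y].Sublist (A ++ (D ++ B)) → y < x → [x,y].Sublist D :=
    fun hs hxy => inv_loc hA hB hAD hAB hDB hs hxy
  have S2 : ∀ {x y : ℕ}, [x,y].Sublist (A ++ (D ++ B)) → x ∈ D → y ∈ D → [x,y].Sublist D :=
    fun hs hx hy => mem_loc hA hB hAD hAB hDB hs hx hy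
  have hDpw : ∀ {x y : ℕ}, [x,y].Sublist D → y < x :=
    fun hs => List.pairwise_iff_forall_sublist.mp hD hs
  refine ⟨?_, ?_, ?_⟩
  · rintro ⟨a, b, c, hs, h1, h2⟩
    have hac : [a,c].Sublist D := S1 (List.Sublist.trans (by
      exact (List.Sublist.cons₂ a (List.sublist_cons_self b [c]))) hs) h1
    have hbc : [b,c].Sublist D := S1 (List.Sublist.trans (by
      exact List.sublist_cons_self a [b,c]) hs) (by omega)
    have hab : [a,b].Sublist (A ++ (D ++ B)) := List.Sublist.trans (by
      exact List.Sublist.cons₂ a (List.Sublist.cons₂ b (List.nil_sublist [c]))) hs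
    have := hDpw (S2 hab (hac.subset (by simp)) (hbc.subset (by simp)))
    omega
  · rintro ⟨a, b, c, hs, h1, h2⟩
    have hab : [a,b].Sublist D := S1 (List.Sublist.trans (by
      exact List.Sublist.cons₂ a (List.Sublist.cons₂ b (List.nil_sublist [c]))) hs) (by omega)
    have hac : [a,c].Sublist D := S1 (List.Sublist.trans (by
      exact (List.Sublist.cons₂ a (List.sublist_cons_self b [c]))) hs) h2
    have hbc : [b,c].Sublist (A ++ (D ++ B)) := List.Sublist.trans (by
      exact List.sublist_cons_self a [b,c]) hs
    have := hDpw (S2 hbc (hab.subset (by simp)) (hac.subset (by simp)))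
    omega
  · rintro ⟨a, b, c, d, hs, h1, h2, h3⟩
    have hab : [a,b].Sublist D := S1 (List.Sublist.trans (by
      exact List.Sublist.cons₂ a (List.Sublist.cons₂ b (List.nil_sublist [c,d]))) hs) h1
    have hcd : [c,d].Sublist D := S1 (List.Sublist.trans (by
      exact List.Sublist.trans (List.Sublist.cons₂ c (List.Sublist.cons₂ d (List.Sublist.refl [])))
        (List.sublist_cons_self b [c,d]) |>.trans (List.sublist_cons_self a [b,c,d]) |>.trans
          (List.Sublist.refl _)) hs) h3
    have had : [a,d].Sublist (A ++ (D ++ B)) := List.Sublist.trans (by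
      exact List.Sublist.cons₂ a
        ((List.sublist_cons_self c [d]).trans (List.sublist_cons_self b [c,d]))) hs
    have := hDpw (S2 had (hab.subset (by simp)) (hcd.subset (by simp)))
    omega
end AvoidLemma

/-! ### Structure of permutations avoiding 2143, 231, 312 -/

instance : IsAntisymm ℕ (· > ·) := ⟨fun _ _ h1 h2 => absurd h1 (by omega)⟩

lemma range'_split (s i j n : ℕ) (hij : i ≤ j) (hjn : j ≤ n) :
    List.range' s n = List.range' s i ++
      (List.range' (s+i) (j-i) ++ List.range' (s+j) (n-j)) := by
  have e1 := List.range'_append (s := s+i) (m := j-i) (n := n-j) (step := 1)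
  have e2 := List.range'_append (s := s) (m := i) (n := n-i) (step := 1)
  simp only [one_mul] at e1 e2
  rw [show s+i+(j-i) = s+j by omega, show (j-i)+(n-j) = n-i by omega] at e1
  rw [show i+(n-i) = n by omega, ← e1] at e2
  exact e2.symm

lemma struct_aux : ∀ n m (π : List ℕ), π.Perm (List.range' (m+1) n) →
    ¬ P231 π → ¬ P312 π → ¬ P2143 π →
    ∃ i j, i ≤ j ∧ j ≤ n ∧
      π = List.range' (m+1) i ++ ((List.range' (m+1+i) (j-i)).reverse ++ List.range' (m+1+j) (n-j)) := by
  intro n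
  induction n with
  | zero =>
    intro m π hπ _ _ _
    exact ⟨0, 0, le_refl _, le_refl _, by simpa using hπ.eq_nil⟩
  | succ n ih =>
    intro m π hπ h231 h312 h2143
    obtain ⟨a, rest, rfl⟩ : ∃ a rest, π = a :: rest := by
      rcases π with _|⟨a, rest⟩
      · exact absurd hπ.symm.eq_nil (by simp [List.range'])
      · exact ⟨a, rest, rfl⟩
    have ha : m + 1 ≤ a ∧ a < m + 1 + (n+1) := by
      have := hπ.subset (List.mem_cons_self (a := a) (l := rest))
      simpa [List.mem_range'_1] using this
    by_cases ht0 : a = m + 1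
    · -- first entry is smallest: recurse
      subst ht0
      have hrest : rest.Perm (List.range' (m+1+1) n) := by
        have h := hπ
        rw [List.range'_succ] at h
        exact h.cons_inv
      have hsub : ∀ (l : List ℕ), l.Sublist rest → l.Sublist ((m+1) :: rest) :=
        fun l hl => hl.trans (List.sublist_cons_self _ _)
      obtain ⟨i, j, hij, hjn, hform⟩ := ih (m+1) rest hrest
        (fun ⟨a,b,c,hs,h⟩ => h231 ⟨a,b,c, hsub _ hs, h⟩)
        (fun ⟨a,b,c,hs,h⟩ => h312 ⟨a,b,c, hsub _ hs, h⟩)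
        (fun ⟨a,b,c,d,hs,h⟩ => h2143 ⟨a,b,c,d, hsub _ hs, h⟩)
      refine ⟨i+1, j+1, by omega, by omega, ?_⟩
      rw [List.range'_succ, show m+1+(i+1) = m+1+1+i by omega,
        show (j+1)-(i+1) = j-i by omega, show m+1+(j+1) = m+1+1+j by omega,
        show n+1-(j+1) = n-j by omega]
      simp only [List.cons_append]
      congr 1
    · -- first entry a = m+1+t with t ≥ 1
      have ht : ∃ t, 1 ≤ t ∧ t ≤ n ∧ a = m + 1 + t := ⟨a - m - 1, by omega, by omega, by omega⟩
      obtain ⟨t, ht1, htn, rfl⟩ := ht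
      set a := m + 1 + t with hadef
      -- rest ~ range'(m+1) t ++ range'(a+1) (n-t)
      have hsplit : List.range' (m+1) (n+1) = List.range' (m+1) t ++ (a :: List.range' (a+1) (n-t)) := by
        have e1 := List.range'_append (s := m+1) (m := t) (n := n+1-t) (step := 1)
        simp only [one_mul] at e1
        rw [show n + 1 = t + (n+1-t) by omega] at hπ ⊢
        rw [← e1, show m+1+t = a from rfl, show n+1-t = (n-t)+1 by omega, List.range'_succ]
      have hrest : rest.Perm (List.range' (m+1) t ++ List.range' (a+1) (n-t)) := by
        have h0 : (a :: rest).Perm (a :: (List.range' (m+1) t ++ List.range' (a+1) (n-t))) := by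
          refine hπ.trans ?_
          rw [hsplit]
          exact List.perm_middle
        exact h0.cons_inv
      have hanotin : a ∉ rest := by
        intro hmem
        have := hrest.subset hmem
        simp only [List.mem_append, List.mem_range'_1] at this
        omega
      set D := rest.takeWhile (fun x => decide (x < a)) with hDdef
      set B := rest.dropWhile (fun x => decide (x < a)) with hBdef
      have hDB : rest = D ++ B := List.takeWhile_append_dropWhile.symm
      have hDlt : ∀ x ∈ D, x < a := by
        intro x hx
        have := List.mem_takeWhile_imp hx
        simpa using this
      have hBgt : ∀ x ∈ B, a < x := by
        rcases hB : B with _|⟨y, B'⟩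
        · simp
        · have hy : ¬ (y < a) := by
            have := List.head?_dropWhile_not (fun x => decide (x < a)) rest
            rw [← hBdef, hB] at this
            simpa using this
          have hymem : y ∈ rest := by rw [hDB, hB]; simp
          have hya : a < y := by
            rcases Nat.lt_trichotomy y a with h|h|h
            · omega
            · exact absurd (h ▸ hymem) hanotin
            · exact h
          intro x hx0
          rcases List.mem_cons.mp hx0 with rfl | hx'
          · exact hya
          · rcases Nat.lt_trichotomy x a with h|h|h
            · exfalso
              apply h231
              refine ⟨a, y, x, ?_, h, hya⟩
              have h1 : [y, x].Sublist B := by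
                rw [hB]
                exact List.Sublist.cons₂ y (List.singleton_sublist.mpr hx')
              have h2 : [y, x].Sublist (D ++ B) := h1.trans (List.sublist_append_right _ _)
              rw [hDB]
              exact List.Sublist.cons₂ a h2
            · exfalso
              apply hanotin
              have : x ∈ rest := by
                rw [hDB, hB]; exact List.mem_append.mpr (Or.inr hx0)
              rwa [h] at this
            · exact h
      -- Nodup
      have hnodup : rest.Nodup := hrest.nodup_iff.mpr (by
        apply List.Nodup.append List.nodup_range' List.nodup_range'
        intro x hx1 hx2
        simp only [List.mem_range'_1] at hx1 hx2
        omega)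
      have hrestDB : (D ++ B).Nodup := by rw [← hDB]; exact hnodup
      have hDnodup : D.Nodup := (List.sublist_append_left D B).nodup hrestDB
      have hBnodup : B.Nodup := (List.sublist_append_right D B).nodup hrestDB
      -- D is decreasing
      have hDpw : D.Pairwise (· > ·) := by
        rw [List.pairwise_iff_forall_sublist]
        intro x y hxy
        have hxD : x ∈ D := hxy.subset (by simp)
        have hyD : y ∈ D := hxy.subset (by simp)
        have hne : x ≠ y := List.pairwise_iff_forall_sublist.mp hDnodup hxy
        rcases Nat.lt_trichotomy x y with h|h|h
        · exfalso
          apply h312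
          refine ⟨a, x, y, ?_, h, hDlt _ hyD⟩
          rw [hDB]
          exact List.Sublist.cons₂ a (hxy.trans (List.sublist_append_left D B))
        · exact absurd h hne
        · exact h
      -- B is increasing
      have hDperm : D.Perm (List.range' (m+1) t) := by
        have hfil : rest.filter (fun x => decide (x < a)) = D := by
          rw [hDB, List.filter_append]
          have h1 : D.filter (fun x => decide (x < a)) = D :=
            List.filter_eq_self.mpr (fun x hx => by simpa using hDlt x hx)
          have h2 : B.filter (fun x => decide (x < a)) = [] :=
            List.filter_eq_nil_iff.mpr (fun x hx => by simpa using by have := hBgt x hx; omega)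
          rw [h1, h2, List.append_nil]
        have := hrest.filter (fun x => decide (x < a))
        rw [hfil, List.filter_append] at this
        have h3 : (List.range' (m+1) t).filter (fun x => decide (x < a)) = List.range' (m+1) t :=
          List.filter_eq_self.mpr (fun x hx => by
            simp only [List.mem_range'_1] at hx; simpa using by omega)
        have h4 : (List.range' (a+1) (n-t)).filter (fun x => decide (x < a)) = [] :=
          List.filter_eq_nil_iff.mpr (fun x hx => by
            simp only [List.mem_range'_1] at hx; simpa using by omega)
        rw [h3, h4, List.append_nil] at this
        exact this
      have hDne : D ≠ [] := by
        intro h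
        have := hDperm.length_eq
        rw [h] at this
        simp at this
        omega
      have hBpw : B.Pairwise (· < ·) := by
        rw [List.pairwise_iff_forall_sublist]
        intro x y hxy
        have hxB : x ∈ B := hxy.subset (by simp)
        have hyB : y ∈ B := hxy.subset (by simp)
        have hne : x ≠ y := List.pairwise_iff_forall_sublist.mp hBnodup hxy
        rcases Nat.lt_trichotomy x y with h|h|h
        · exact h
        · exact absurd h hne
        · exfalso
          apply h2143
          have hdmem : D.head hDne ∈ D := List.head_mem hDne
          refine ⟨a, D.head hDne, x, y, ?_, hDlt _ hdmem, hBgt y hyB, h⟩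
          rw [hDB]
          exact List.Sublist.cons₂ a
            (List.Sublist.append (List.singleton_sublist.mpr hdmem) hxy)
      have hBperm : B.Perm (List.range' (a+1) (n-t)) := by
        have hfil : rest.filter (fun x => decide (a < x)) = B := by
          rw [hDB, List.filter_append]
          have h1 : D.filter (fun x => decide (a < x)) = [] :=
            List.filter_eq_nil_iff.mpr (fun x hx => by simpa using by have := hDlt x hx; omega)
          have h2 : B.filter (fun x => decide (a < x)) = B :=
            List.filter_eq_self.mpr (fun x hx => by simpa using hBgt x hx)
          rw [h1, h2, List.nil_append]
        have := hrest.filter (fun x => decide (a < x))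
        rw [hfil, List.filter_append] at this
        have h3 : (List.range' (m+1) t).filter (fun x => decide (a < x)) = [] :=
          List.filter_eq_nil_iff.mpr (fun x hx => by
            simp only [List.mem_range'_1] at hx; simpa using by omega)
        have h4 : (List.range' (a+1) (n-t)).filter (fun x => decide (a < x)) = List.range' (a+1) (n-t) :=
          List.filter_eq_self.mpr (fun x hx => by
            simp only [List.mem_range'_1] at hx; simpa using by omega)
        rw [h3, h4, List.nil_append] at this
        exact this
      -- D and B are determined
      have hDeq : D = (List.range' (m+1) t).reverse := by
        refine List.Perm.eq_of_pairwise' (r := (· > ·)) hDpw ?_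
          (hDperm.trans (List.reverse_perm _).symm)
        rw [List.pairwise_reverse]
        exact (List.pairwise_lt_range' 1).imp (fun h => h)
      have hBeq : B = List.range' (a+1) (n-t) := by
        refine List.Perm.eq_of_pairwise' (r := (· < ·)) hBpw ?_ hBperm
        exact List.pairwise_lt_range' 1
      refine ⟨0, t+1, by omega, by omega, ?_⟩
      simp only [List.range'_zero, List.nil_append, Nat.sub_zero, Nat.add_zero]
      rw [show m+1+(t+1) = a+1 by omega, show n+1-(t+1) = n-t by omega, List.range'_concat,
        show m+1+1*t = a by omega]
      simp only [List.reverse_append, List.reverse_cons, List.reverse_nil, List.nil_append,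
        List.cons_append]
      rw [hDB, hDeq, hBeq]

end Aux

/-- `B_1^{rd} = Av(2143, 231, 312)`. -/
theorem B1_eq_Av :
    Brd 1 = {π : List ℕ | IsPermList π ∧ ¬ IsPattern [2, 1, 4, 3] π ∧
      ¬ IsPattern [2, 3, 1] π ∧ ¬ IsPattern [3, 1, 2] π} := by
  ext π
  simp only [Brd, Set.mem_setOf_eq]
  constructor
  · rintro ⟨hperm, hrd⟩
    have hform : ∃ A D B : List ℕ, π = A ++ (D ++ B) ∧ A.Pairwise (· < ·) ∧
        D.Pairwise (· > ·) ∧ B.Pairwise (· < ·) ∧ (∀ a ∈ A, ∀ d ∈ D, a < d) ∧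
        (∀ a ∈ A, ∀ b ∈ B, a < b) ∧ (∀ d ∈ D, ∀ b ∈ B, d < b) := by
      obtain ⟨k0, hk0⟩ := sortable hperm
      have hmem := Nat.sInf_mem (⟨k0, hk0⟩ :
        Set.Nonempty {k | ReachIn RevStep k π (idPerm π.length)})
      have hK : sInf {k | ReachIn RevStep k π (idPerm π.length)} ≤ 1 := hrd
      rcases Nat.le_one_iff_eq_zero_or_eq_one.mp hK with h0 | h1
      · rw [h0] at hmem
        have hid : π = idPerm π.length := hmem
        refine ⟨[], [], List.range' 1 π.length, by simpa [idPerm] using hid, by simp, by simp,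
          List.pairwise_lt_range' 1, by simp, by simp, by simp⟩
      · rw [h1] at hmem
        obtain ⟨z, hstep, hz⟩ := hmem
        have hz' : z = idPerm π.length := hz
        obtain ⟨i, j, hij, hj, hzeq⟩ := hstep
        rw [hz'] at hzeq
        have hinv := seg_invol (l := π) hij.le hj
        rw [← hzeq] at hinv
        have hsplit := range'_split 1 i (j+1) π.length (by omega) (by omega)
        have hseg := seg_decomp (A := List.range' 1 i) (B := List.range' (1+i) (j+1-i))
          (C := List.range' (1+(j+1)) (π.length-(j+1))) (by simp) (by simp) hij.le
        refine ⟨List.range' 1 i, (List.range' (1+i) (j+1-i)).reverse,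
          List.range' (1+(j+1)) (π.length-(j+1)), ?_, List.pairwise_lt_range' 1, ?_,
          List.pairwise_lt_range' 1, ?_, ?_, ?_⟩
        · conv_lhs => rw [← hinv]
          rw [idPerm, hsplit, hseg]
        · rw [List.pairwise_reverse]
          exact (List.pairwise_lt_range' 1).imp (fun h => h)
        · intro x hx d hd
          rw [List.mem_reverse] at hd
          simp only [List.mem_range'_1] at hx hd
          omega
        · intro x hx b hb
          simp only [List.mem_range'_1] at hx hb
          omega
        · intro d hd b hb
          rw [List.mem_reverse] at hd
          simp only [List.mem_range'_1] at hd hb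
          omega
    obtain ⟨A, D, B, hπ, hA, hD, hB, hAD, hAB, hDB⟩ := hform
    obtain ⟨hn231, hn312, hn2143⟩ := avoid_ADB hA hD hB hAD hAB hDB
    rw [← hπ] at hn231 hn312 hn2143
    exact ⟨hperm, fun h => hn2143 (isPattern_2143.mp h), fun h => hn231 (isPattern_231.mp h),
      fun h => hn312 (isPattern_312.mp h)⟩
  · rintro ⟨hperm, hp2143, hp231, hp312⟩
    refine ⟨hperm, ?_⟩
    obtain ⟨i, j, hij, hjn, hform⟩ := struct_aux π.length 0 π (by simpa [IsPermList, idPerm] using hperm)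
      (fun h => hp231 (isPattern_231.mpr h)) (fun h => hp312 (isPattern_312.mpr h))
      (fun h => hp2143 (isPattern_2143.mpr h))
    simp only [Nat.zero_add] at hform
    show sInf {k | ReachIn RevStep k π (idPerm π.length)} ≤ 1
    by_cases hcase : j ≤ i + 1
    · have hrev : (List.range' (1+i) (j-i)).reverse = List.range' (1+i) (j-i) := by
        rcases (by omega : j - i = 0 ∨ j - i = 1) with h | h <;> rw [h] <;> simp
      have hid : π = idPerm π.length := by
        conv_lhs => rw [hform, hrev]
        rw [idPerm]
        exact (range'_split 1 i j π.length hij hjn).symm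
      have h0 : (0 : ℕ) ∈ {k | ReachIn RevStep k π (idPerm π.length)} := hid
      exact le_trans (Nat.sInf_le h0) (by omega)
    · have hsr : segReverse π i (j-1) = idPerm π.length := by
        have hlen1 : (List.range' 1 i).length = i := by simp
        have hlen2 : ((List.range' (1+i) (j-i)).reverse).length = (j-1) + 1 - i := by
          simp; omega
        conv_lhs => rw [hform]
        rw [seg_decomp hlen1 hlen2 (by omega), List.reverse_reverse, idPerm]
        exact (range'_split 1 i j π.length hij hjn).symm
      have hstep : RevStep π (idPerm π.length) := ⟨i, j - 1, by omega, by omega, hsr.symm⟩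
      have h1 : (1 : ℕ) ∈ {k | ReachIn RevStep k π (idPerm π.length)} :=
        ⟨idPerm π.length, hstep, rfl⟩
      exact Nat.sInf_le h1
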